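/- In synthetic dataset B with a single coordinate, the correlation between x and y equals 1/√(1 + σ²(p + k(1-p))); in particular, for fixed σ² and k > 1, the correlation is strictly increasing in p. -/

import Mathlib

open MeasureTheory ProbabilityTheory Real Set
open scoped NNReal ENNReal

lemma aux_I1 {b : ℝ} (hb : 0 < b) : ∫ x : ℝ, x * rexp (-b * x^2) = 0 := by
  have h := integral_neg_eq_self (fun x : ℝ => x * rexp (-b * x^2)) volume
  simp only [neg_mul, neg_sq, neg_neg] at h
  have h2 : ∫ x : ℝ, -(x * rexp (-b * x^2)) = ∫ x : ℝ, x * rexp (-b * x^2) := by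
    simpa using h
  rw [integral_neg] at h2
  linarith

lemma aux_int_sq {b : ℝ} (hb : 0 < b) :
    Integrable (fun x : ℝ => x^2 * rexp (-b * x^2)) := by
  have h := integrable_rpow_mul_exp_neg_mul_sq hb (s := 2) (by norm_num)
  have : ∀ x : ℝ, x ^ (2:ℝ) = x ^ 2 := fun x => by
    rw [show (2:ℝ) = ((2:ℕ):ℝ) by norm_num, Real.rpow_natCast]
  simpa [this] using h

lemma aux_I2 {b : ℝ} (hb : 0 < b) :
    ∫ x : ℝ, x^2 * rexp (-b * x^2) = Real.sqrt (π / b) / (2*b) := by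
  have hrpow : ∀ x : ℝ, x ^ (2:ℝ) = x ^ 2 := fun x => by
    rw [show (2:ℝ) = ((2:ℕ):ℝ) by norm_num, Real.rpow_natCast]
  have hIoi : ∫ x in Ioi (0:ℝ), x^2 * rexp (-b * x^2)
      = b ^ (-(3:ℝ)/2) * (1/2) * Real.Gamma (3/2) := by
    have h := integral_rpow_mul_exp_neg_mul_rpow (p := 2) (q := 2) (b := b)
      (by norm_num) (by norm_num) hb
    simp only [hrpow] at h
    rw [h]; norm_num
  have hint := aux_int_sq hb
  have heven : ∀ x : ℝ, (-x)^2 * rexp (-b * (-x)^2) = x^2 * rexp (-b * x^2) := by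
    intro x; rw [neg_sq]
  have hsplit : ∫ x : ℝ, x^2 * rexp (-b * x^2)
      = 2 * ∫ x in Ioi (0:ℝ), x^2 * rexp (-b * x^2) := by
    rw [← intervalIntegral.integral_Iio_add_Ici (b := (0:ℝ)) hint.integrableOn hint.integrableOn]
    rw [integral_Ici_eq_integral_Ioi]
    have : ∫ x in Iio (0:ℝ), x^2 * rexp (-b * x^2)
        = ∫ x in Ioi (0:ℝ), x^2 * rexp (-b * x^2) := by
      rw [← MeasureTheory.integral_Iic_eq_integral_Iio,
        show Iic (0:ℝ) = Iic (-0) by norm_num, ← integral_comp_neg_Ioi]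
      simp only [heven]
    rw [this]; ring
  rw [hsplit, hIoi]
  have hG : Real.Gamma (3/2) = Real.sqrt π / 2 := by
    have := Real.Gamma_add_one (s := 1/2) (by norm_num)
    rw [Real.Gamma_one_half_eq] at this
    norm_num at this ⊢
    linarith
  have hb32 : b ^ (-(3:ℝ)/2) = (b * Real.sqrt b)⁻¹ := by
    rw [show -(3:ℝ)/2 = -1 + -(1/2) by norm_num, Real.rpow_add hb, Real.rpow_neg_one,
      Real.rpow_neg hb.le, ← Real.sqrt_eq_rpow, mul_inv]
  rw [hG, hb32, Real.sqrt_div' π hb.le]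
  have hsb : (0:ℝ) < Real.sqrt b := Real.sqrt_pos.mpr hb
  field_simp


lemma gauss_pdf_eq (m : ℝ) (v : ℝ≥0) (x : ℝ) :
    gaussianPDFReal m v x = (Real.sqrt (2*π*v))⁻¹ * rexp (-(2*(v:ℝ))⁻¹ * (x-m)^2) := by
  rw [gaussianPDFReal]
  have : -(x - m)^2/(2*(v:ℝ)) = -(2*(v:ℝ))⁻¹ * (x-m)^2 := by ring
  rw [this]

lemma gauss_integral (m : ℝ) {v : ℝ≥0} (hv : v ≠ 0) (g : ℝ → ℝ) :
    ∫ x, g x ∂(gaussianReal m v) = ∫ x, gaussianPDFReal m v x * g x := by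
  rw [gaussianReal_of_var_ne_zero _ hv]
  have h1 : (volume.withDensity (gaussianPDF m v))
      = volume.withDensity (fun x => ((Real.toNNReal (gaussianPDFReal m v x)) : ℝ≥0∞)) := rfl
  rw [h1, integral_withDensity_eq_integral_smul
    ((measurable_gaussianPDFReal m v).real_toNNReal) g]
  congr 1; ext x
  rw [NNReal.smul_def, smul_eq_mul, Real.coe_toNNReal _ (gaussianPDFReal_nonneg _ _ _)]

lemma gauss_integrable_iff (m : ℝ) {v : ℝ≥0} (hv : v ≠ 0) (g : ℝ → ℝ) :
    Integrable g (gaussianReal m v) ↔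
      Integrable (fun x => gaussianPDFReal m v x * g x) volume := by
  rw [gaussianReal_of_var_ne_zero _ hv]
  have h1 : (volume.withDensity (gaussianPDF m v))
      = volume.withDensity (fun x => ((Real.toNNReal (gaussianPDFReal m v x)) : ℝ≥0∞)) := rfl
  rw [h1, integrable_withDensity_iff_integrable_smul
    ((measurable_gaussianPDFReal m v).real_toNNReal)]
  constructor <;> intro h <;> refine h.congr (Filter.Eventually.of_forall fun x => ?_) <;>
    simp only [NNReal.smul_def, smul_eq_mul,
      Real.coe_toNNReal _ (gaussianPDFReal_nonneg _ _ _)]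

lemma gauss_norm {v : ℝ≥0} (hv : v ≠ 0) :
    (Real.sqrt (2*π*(v:ℝ)))⁻¹ * Real.sqrt (π / (2*(v:ℝ))⁻¹) = 1 := by
  have hv0 : (0:ℝ) < v := lt_of_le_of_ne v.coe_nonneg (by exact_mod_cast hv.symm)
  have h : π / (2*(v:ℝ))⁻¹ = 2*π*(v:ℝ) := by field_simp
  rw [h, inv_mul_cancel₀]
  positivity

lemma gauss_mean (m : ℝ) {v : ℝ≥0} (hv : v ≠ 0) :
    ∫ x, x ∂(gaussianReal m v) = m := by
  have hv0 : (0:ℝ) < v := lt_of_le_of_ne v.coe_nonneg (by exact_mod_cast hv.symm)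
  have hb : (0:ℝ) < (2*(v:ℝ))⁻¹ := by positivity
  set b : ℝ := (2*(v:ℝ))⁻¹ with hbdef
  rw [gauss_integral m hv]
  have h1 : (∫ x, gaussianPDFReal m v x * x)
      = ∫ x, (fun u => (Real.sqrt (2*π*(v:ℝ)))⁻¹ * (rexp (-b*u^2) * (u+m))) (x - m) := by
    congr 1; ext x; simp only [gauss_pdf_eq]; ring
  have hshift := integral_sub_right_eq_self (μ := volume)
    (fun u => (Real.sqrt (2*π*(v:ℝ)))⁻¹ * (rexp (-b*u^2) * (u+m))) m
  rw [h1, hshift]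
  simp only [integral_const_mul]
  have h2 : (∫ u : ℝ, rexp (-b*u^2) * (u+m))
      = (∫ u : ℝ, u * rexp (-b*u^2)) + m * ∫ u : ℝ, rexp (-b*u^2) := by
    rw [← integral_const_mul, ← integral_add (integrable_mul_exp_neg_mul_sq hb)
      ((integrable_exp_neg_mul_sq hb).const_mul m)]
    congr 1; ext u; ring
  rw [h2, aux_I1 hb, integral_gaussian, zero_add,
    show (Real.sqrt (2*π*(v:ℝ)))⁻¹ * (m * Real.sqrt (π / b))
      = m * ((Real.sqrt (2*π*(v:ℝ)))⁻¹ * Real.sqrt (π / b)) from by ring, hbdef,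
    gauss_norm hv, mul_one]

lemma gauss_sq (m : ℝ) {v : ℝ≥0} (hv : v ≠ 0) :
    ∫ x, x^2 ∂(gaussianReal m v) = m^2 + v := by
  have hv0 : (0:ℝ) < v := lt_of_le_of_ne v.coe_nonneg (by exact_mod_cast hv.symm)
  have hb : (0:ℝ) < (2*(v:ℝ))⁻¹ := by positivity
  set b : ℝ := (2*(v:ℝ))⁻¹ with hbdef
  rw [gauss_integral m hv]
  have h1 : (∫ x, gaussianPDFReal m v x * x^2)
      = ∫ x, (fun u => (Real.sqrt (2*π*(v:ℝ)))⁻¹ * (rexp (-b*u^2) * (u+m)^2)) (x - m) := by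
    congr 1; ext x; simp only [gauss_pdf_eq]; ring
  have hshift := integral_sub_right_eq_self (μ := volume)
    (fun u => (Real.sqrt (2*π*(v:ℝ)))⁻¹ * (rexp (-b*u^2) * (u+m)^2)) m
  rw [h1, hshift]
  simp only [integral_const_mul]
  have h2 : (∫ u : ℝ, rexp (-b*u^2) * (u+m)^2)
      = (∫ u : ℝ, u^2 * rexp (-b*u^2)) + ((2*m) * ∫ u : ℝ, u * rexp (-b*u^2))
        + m^2 * ∫ u : ℝ, rexp (-b*u^2) := by
    have e1 : (∫ u : ℝ, rexp (-b*u^2) * (u+m)^2)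
        = ∫ u : ℝ, (u^2 * rexp (-b*u^2) + (2*m) * (u * rexp (-b*u^2)))
            + m^2 * rexp (-b*u^2) := by
      congr 1; ext u; ring
    have iA : Integrable (fun u : ℝ => u^2 * rexp (-b*u^2)
        + 2*m*(u*rexp (-b*u^2))) volume := by
      exact (aux_int_sq hb).add ((integrable_mul_exp_neg_mul_sq hb).const_mul (2*m))
    rw [e1, integral_add iA ((integrable_exp_neg_mul_sq hb).const_mul (m^2)),
      integral_add (aux_int_sq hb) ((integrable_mul_exp_neg_mul_sq hb).const_mul (2*m)),
      integral_const_mul, integral_const_mul]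
  rw [h2, aux_I1 hb, aux_I2 hb, integral_gaussian, mul_zero, add_zero]
  have hnorm : (Real.sqrt (2*π*(v:ℝ)))⁻¹ * Real.sqrt (π / b) = 1 := by
    rw [hbdef]; exact gauss_norm hv
  have hs : Real.sqrt (π / b) = Real.sqrt (2*π*(v:ℝ)) := by
    rw [hbdef]; congr 1; field_simp
  have hcI2 : (Real.sqrt (2*π*(v:ℝ)))⁻¹ * (Real.sqrt (π / b) / (2*b)) = v := by
    rw [hs, div_eq_mul_inv, ← mul_assoc, inv_mul_cancel₀ (by positivity), one_mul, hbdef]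
    field_simp
  calc (Real.sqrt (2*π*(v:ℝ)))⁻¹ * (Real.sqrt (π / b) / (2 * b) + m ^ 2 * Real.sqrt (π / b))
      = (Real.sqrt (2*π*(v:ℝ)))⁻¹ * (Real.sqrt (π / b) / (2 * b))
        + m^2 * ((Real.sqrt (2*π*(v:ℝ)))⁻¹ * Real.sqrt (π / b)) := by ring
    _ = m^2 + (v:ℝ) := by rw [hcI2, hnorm]; ring

lemma gauss_int_id (m : ℝ) {v : ℝ≥0} (hv : v ≠ 0) :
    Integrable (fun x : ℝ => x) (gaussianReal m v) := by
  have hv0 : (0:ℝ) < v := lt_of_le_of_ne v.coe_nonneg (by exact_mod_cast hv.symm)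
  have hb : (0:ℝ) < (2*(v:ℝ))⁻¹ := by positivity
  set b : ℝ := (2*(v:ℝ))⁻¹ with hbdef
  rw [gauss_integrable_iff m hv]
  have h1 : (fun x => gaussianPDFReal m v x * x)
      = fun x => (fun u => (Real.sqrt (2*π*(v:ℝ)))⁻¹ * (rexp (-b*u^2) * (u+m))) (x - m) := by
    ext x; simp only [gauss_pdf_eq]; ring
  have hF : Integrable (fun u : ℝ => (Real.sqrt (2*π*(v:ℝ)))⁻¹
      * (rexp (-b*u^2) * (u+m))) := by
    refine Integrable.const_mul ?_ _
    have : (fun u : ℝ => rexp (-b*u^2) * (u+m))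
        = fun u : ℝ => u * rexp (-b*u^2) + m * rexp (-b*u^2) := by ext u; ring
    rw [this]
    exact (integrable_mul_exp_neg_mul_sq hb).add ((integrable_exp_neg_mul_sq hb).const_mul m)
  rw [h1]
  exact hF.comp_sub_right m

lemma gauss_int_sq (m : ℝ) {v : ℝ≥0} (hv : v ≠ 0) :
    Integrable (fun x : ℝ => x^2) (gaussianReal m v) := by
  have hv0 : (0:ℝ) < v := lt_of_le_of_ne v.coe_nonneg (by exact_mod_cast hv.symm)
  have hb : (0:ℝ) < (2*(v:ℝ))⁻¹ := by positivity
  set b : ℝ := (2*(v:ℝ))⁻¹ with hbdef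
  rw [gauss_integrable_iff m hv]
  have h1 : (fun x => gaussianPDFReal m v x * x^2)
      = fun x => (fun u => (Real.sqrt (2*π*(v:ℝ)))⁻¹ * (rexp (-b*u^2) * (u+m)^2)) (x - m) := by
    ext x; simp only [gauss_pdf_eq]; ring
  have hF : Integrable (fun u : ℝ => (Real.sqrt (2*π*(v:ℝ)))⁻¹
      * (rexp (-b*u^2) * (u+m)^2)) := by
    refine Integrable.const_mul ?_ _
    have : (fun u : ℝ => rexp (-b*u^2) * (u+m)^2)
        = fun u : ℝ => (u^2 * rexp (-b*u^2) + (2*m) * (u * rexp (-b*u^2)))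
            + m^2 * rexp (-b*u^2) := by ext u; ring
    rw [this]
    exact ((aux_int_sq hb).add ((integrable_mul_exp_neg_mul_sq hb).const_mul (2*m))).add
      ((integrable_exp_neg_mul_sq hb).const_mul (m^2))
  rw [h1]
  exact hF.comp_sub_right m

lemma aux_cond_moments {Ω : Type*} [MeasurableSpace Ω] (ν : Measure Ω) [IsProbabilityMeasure ν]
    (b n nb : Ω → ℝ) (p : ℝ) (σ2 k : NNReal) (s : ℝ)
    (hp : p ∈ Set.Icc (0:ℝ) 1) (hσ : 0 < σ2) (hk : 0 < k) (hs : s = 1 ∨ s = -1)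
    (hbm : Measurable b) (hnm : Measurable n) (hnbm : Measurable nb)
    (hbl : Measure.map b ν
      = ENNReal.ofReal p • Measure.dirac (1:ℝ) + ENNReal.ofReal (1-p) • Measure.dirac (0:ℝ))
    (hnl : Measure.map n ν = gaussianReal s σ2)
    (hnbl : Measure.map nb ν = gaussianReal s (k * σ2))
    (hind : iIndepFun (m := fun _ : Fin 3 => (inferInstance : MeasurableSpace ℝ)) ![b, n, nb] ν) :
    (∫ ω, (b ω * n ω + (1 - b ω) * nb ω) ∂ν = s)
    ∧ (∫ ω, (b ω * n ω + (1 - b ω) * nb ω)^2 ∂ν = 1 + (σ2:ℝ) * (p + (k:ℝ)*(1-p)))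
    ∧ Integrable (fun ω => b ω * n ω + (1 - b ω) * nb ω) ν
    ∧ Integrable (fun ω => (b ω * n ω + (1 - b ω) * nb ω)^2) ν := by
  have hσ' : σ2 ≠ 0 := hσ.ne'
  have hkσ : k * σ2 ≠ 0 := by positivity
  have hs2 : s^2 = 1 := by rcases hs with h | h <;> simp [h]
  -- b takes values in {0, 1} a.e.
  have hS : MeasurableSet ({0, 1} : Set ℝ) := (measurableSet_singleton 1).insert 0
  have hbae : ∀ᵐ ω ∂ν, b ω = 0 ∨ b ω = 1 := by
    rw [ae_iff]
    have : {ω | ¬(b ω = 0 ∨ b ω = 1)} = b ⁻¹' ({0, 1} : Set ℝ)ᶜ := by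
      ext ω; simp [Set.mem_preimage]
    rw [this, ← Measure.map_apply hbm hS.compl, hbl]
    simp [Measure.dirac_apply' _ hS.compl, Set.indicator_apply]
  -- integrability and mean of b
  have hbint : Integrable b ν := by
    refine Integrable.mono' (integrable_const 1) hbm.aestronglyMeasurable ?_
    filter_upwards [hbae] with ω h
    rcases h with h | h <;> simp [h]
  have hEb : ∫ ω, b ω ∂ν = p := by
    have h1 := integral_map (μ := ν) hbm.aemeasurable (f := fun x : ℝ => x)
      measurable_id.aestronglyMeasurable
    have hi1 : Integrable (fun x : ℝ => x) (ENNReal.ofReal p • Measure.dirac (1:ℝ)) :=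
      (((integrable_const (1:ℝ)).congr (ae_eq_dirac (fun x : ℝ => x)).symm).smul_measure
        ENNReal.ofReal_ne_top)
    have hi2 : Integrable (fun x : ℝ => x) (ENNReal.ofReal (1-p) • Measure.dirac (0:ℝ)) :=
      (((integrable_const (0:ℝ)).congr (ae_eq_dirac (fun x : ℝ => x)).symm).smul_measure
        ENNReal.ofReal_ne_top)
    rw [← h1, hbl, integral_add_measure hi1 hi2, integral_smul_measure, integral_smul_measure,
      integral_dirac, integral_dirac, ENNReal.toReal_ofReal hp.1]
    simp
  -- integrability and moments of n, nb
  have hnint : Integrable n ν :=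
    (integrable_map_measure measurable_id.aestronglyMeasurable hnm.aemeasurable).mp
      (by rw [hnl]; exact gauss_int_id s hσ')
  have hnbint : Integrable nb ν :=
    (integrable_map_measure measurable_id.aestronglyMeasurable hnbm.aemeasurable).mp
      (by rw [hnbl]; exact gauss_int_id s hkσ)
  have hEn : ∫ ω, n ω ∂ν = s := by
    have h1 := integral_map (μ := ν) hnm.aemeasurable (f := fun x : ℝ => x)
      measurable_id.aestronglyMeasurable
    rw [← h1, hnl]; exact gauss_mean s hσ'
  have hEnb : ∫ ω, nb ω ∂ν = s := by
    have h1 := integral_map (μ := ν) hnbm.aemeasurable (f := fun x : ℝ => x)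
      measurable_id.aestronglyMeasurable
    rw [← h1, hnbl]; exact gauss_mean s hkσ
  have hn2int : Integrable (fun ω => (n ω)^2) ν :=
    (integrable_map_measure ((measurable_id.pow_const 2).aestronglyMeasurable)
        hnm.aemeasurable).mp (by rw [hnl]; exact gauss_int_sq s hσ')
  have hnb2int : Integrable (fun ω => (nb ω)^2) ν :=
    (integrable_map_measure ((measurable_id.pow_const 2).aestronglyMeasurable)
        hnbm.aemeasurable).mp (by rw [hnbl]; exact gauss_int_sq s hkσ)
  have hEn2 : ∫ ω, (n ω)^2 ∂ν = 1 + (σ2:ℝ) := by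
    have h1 := integral_map (μ := ν) hnm.aemeasurable (f := fun x : ℝ => x^2)
      (measurable_id.pow_const 2).aestronglyMeasurable
    rw [← h1, hnl, gauss_sq s hσ', hs2]
  have hEnb2 : ∫ ω, (nb ω)^2 ∂ν = 1 + (k:ℝ) * (σ2:ℝ) := by
    have h1 := integral_map (μ := ν) hnbm.aemeasurable (f := fun x : ℝ => x^2)
      (measurable_id.pow_const 2).aestronglyMeasurable
    rw [← h1, hnbl, gauss_sq s hkσ, hs2]
    push_cast; ring
  -- independence
  have hbn : IndepFun b n ν := by
    have h := hind.indepFun (i := 0) (j := 1) (by decide)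
    simpa using h
  have hbnb : IndepFun b nb ν := by
    have h := hind.indepFun (i := 0) (j := 2) (by decide)
    simpa using h
  have h1b_nb : IndepFun (fun ω => 1 - b ω) nb ν := by
    have := hbnb.comp (φ := fun x : ℝ => 1 - x) (ψ := id)
      (measurable_const.sub measurable_id) measurable_id
    exact this
  have hbn2 : IndepFun b (fun ω => (n ω)^2) ν := by
    have := hbn.comp (φ := id) (ψ := fun x : ℝ => x^2)
      measurable_id (measurable_id.pow_const 2)
    exact this
  have h1b_nb2 : IndepFun (fun ω => 1 - b ω) (fun ω => (nb ω)^2) ν := by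
    have := hbnb.comp (φ := fun x : ℝ => 1 - x) (ψ := fun x : ℝ => x^2)
      (measurable_const.sub measurable_id) (measurable_id.pow_const 2)
    exact this
  have h1bint : Integrable (fun ω => 1 - b ω) ν := (integrable_const (1:ℝ)).sub hbint
  have hE1b : ∫ ω, (1 - b ω) ∂ν = 1 - p := by
    rw [integral_sub (integrable_const 1) hbint, hEb, integral_const]
    simp
  -- products
  have hbnint : Integrable (fun ω => b ω * n ω) ν := by
    have := hbn.integrable_mul hbint hnint
    simpa [Pi.mul_def] using this
  have h1bnbint : Integrable (fun ω => (1 - b ω) * nb ω) ν := by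
    have := h1b_nb.integrable_mul h1bint hnbint
    simpa [Pi.mul_def] using this
  have hbn2int : Integrable (fun ω => b ω * (n ω)^2) ν := by
    have := hbn2.integrable_mul hbint hn2int
    simpa [Pi.mul_def] using this
  have h1bnb2int : Integrable (fun ω => (1 - b ω) * (nb ω)^2) ν := by
    have := h1b_nb2.integrable_mul h1bint hnb2int
    simpa [Pi.mul_def] using this
  have hEbn : ∫ ω, b ω * n ω ∂ν = p * s := by
    have := hbn.integral_mul_eq_mul_integral hbint.aestronglyMeasurable hnint.aestronglyMeasurable
    simp only [Pi.mul_apply] at this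
    rw [show (fun ω => b ω * n ω) = b * n from rfl]
    rw [show (∫ ω, (b * n) ω ∂ν) = integral ν (b * n) from rfl, show integral ν (b * n) = _ from this, hEb, hEn]
  have hE1bnb : ∫ ω, (1 - b ω) * nb ω ∂ν = (1 - p) * s := by
    have := h1b_nb.integral_mul_eq_mul_integral h1bint.aestronglyMeasurable hnbint.aestronglyMeasurable
    rw [show (∫ ω, (1 - b ω) * nb ω ∂ν)
      = integral ν ((fun ω => 1 - b ω) * nb) from rfl, this, hE1b, hEnb]
  have hEbn2 : ∫ ω, b ω * (n ω)^2 ∂ν = p * (1 + (σ2:ℝ)) := by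
    have := hbn2.integral_mul_eq_mul_integral hbint.aestronglyMeasurable hn2int.aestronglyMeasurable
    rw [show (∫ ω, b ω * (n ω)^2 ∂ν)
      = integral ν (b * (fun ω => (n ω)^2)) from rfl, this, hEb, hEn2]
  have hE1bnb2 : ∫ ω, (1 - b ω) * (nb ω)^2 ∂ν = (1 - p) * (1 + (k:ℝ)*(σ2:ℝ)) := by
    have := h1b_nb2.integral_mul_eq_mul_integral h1bint.aestronglyMeasurable hnb2int.aestronglyMeasurable
    rw [show (∫ ω, (1 - b ω) * (nb ω)^2 ∂ν)
      = integral ν ((fun ω => 1 - b ω) * (fun ω => (nb ω)^2)) from rfl, this, hE1b, hEnb2]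
  -- a.e. identity for the square
  have hsq_ae : (fun ω => (b ω * n ω + (1 - b ω) * nb ω)^2)
      =ᵐ[ν] fun ω => b ω * (n ω)^2 + (1 - b ω) * (nb ω)^2 := by
    filter_upwards [hbae] with ω h
    rcases h with h | h <;> simp [h] <;> ring
  refine ⟨?_, ?_, ?_, ?_⟩
  · rw [integral_add hbnint h1bnbint, hEbn, hE1bnb]
    rcases hs with h | h <;> rw [h] <;> ring
  · rw [integral_congr_ae hsq_ae, integral_add hbn2int h1bnb2int, hEbn2, hE1bnb2]
    ring
  · exact hbnint.add h1bnbint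
  · exact (hbn2int.add h1bnb2int).congr hsq_ae.symm

lemma aux_cond_int {Ω : Type*} [MeasurableSpace Ω] (μ : Measure Ω) [IsProbabilityMeasure μ]
    {A : Set Ω} (hA : MeasurableSet A) (hμA : μ A = 1/2) (f : Ω → ℝ)
    (hf : Integrable f (μ[|A])) :
    IntegrableOn f A μ ∧ ∫ ω in A, f ω ∂μ = (1/2) * ∫ ω, f ω ∂(μ[|A]) := by
  have hcond : μ[|A] = (μ A)⁻¹ • μ.restrict A := rfl
  have hinv : (μ A)⁻¹ = 2 := by rw [hμA]; simp
  have h0 : (μ A)⁻¹ ≠ 0 := by rw [hinv]; norm_num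
  have htop : (μ A)⁻¹ ≠ ⊤ := by rw [hinv]; norm_num
  rw [hcond] at hf
  constructor
  · exact (integrable_smul_measure h0 htop).mp hf
  · have := integral_smul_measure (μ := μ.restrict A) f (μ A)⁻¹
    rw [hcond, this, hinv]
    simp only [ENNReal.toReal_ofNat, smul_eq_mul]
    ring

theorem stmt18 {Ω : Type*} [MeasurableSpace Ω] (μ : Measure Ω) [IsProbabilityMeasure μ]
    (y b n nb x : Ω → ℝ) (p : ℝ) (σ2 k : NNReal)
    (hp : p ∈ Set.Icc (0:ℝ) 1) (hσ : 0 < σ2) (hk : 0 < k)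
    (hym : Measurable y) (hbm : Measurable b) (hnm : Measurable n) (hnbm : Measurable nb)
    (hyval : ∀ ω, y ω = 1 ∨ y ω = -1)
    (hyunif : μ {ω | y ω = 1} = 1/2)
    (hx : ∀ ω, x ω = b ω * n ω + (1 - b ω) * nb ω)
    (hb : ∀ s : ℝ, s = 1 ∨ s = -1 →
      Measure.map b (μ[|{ω | y ω = s}]) =
        ENNReal.ofReal p • Measure.dirac (1:ℝ) + ENNReal.ofReal (1 - p) • Measure.dirac (0:ℝ))
    (hn : ∀ s : ℝ, s = 1 ∨ s = -1 →
      Measure.map n (μ[|{ω | y ω = s}]) = gaussianReal s σ2)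
    (hnb : ∀ s : ℝ, s = 1 ∨ s = -1 →
      Measure.map nb (μ[|{ω | y ω = s}]) = gaussianReal s (k * σ2))
    (hindep : ∀ s : ℝ, s = 1 ∨ s = -1 →
      iIndepFun (m := fun _ : Fin 3 => (inferInstance : MeasurableSpace ℝ)) ![b, n, nb]
        (μ[|{ω | y ω = s}])) :
    ((∫ ω, x ω * y ω ∂μ) /
      Real.sqrt ((∫ ω, (x ω)^2 ∂μ) * (∫ ω, (y ω)^2 ∂μ)) =
        1 / Real.sqrt (1 + (σ2:ℝ) * (p + (k:ℝ) * (1 - p)))) ∧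
    ((1:ℝ) < k → ∀ p1 p2 : ℝ, 0 ≤ p1 → p1 < p2 → p2 ≤ 1 →
      1 / Real.sqrt (1 + (σ2:ℝ) * (p1 + (k:ℝ) * (1 - p1))) <
        1 / Real.sqrt (1 + (σ2:ℝ) * (p2 + (k:ℝ) * (1 - p2)))) := by
  constructor
  · -- correlation computation
    set A1 : Set Ω := {ω | y ω = 1} with hA1def
    set A2 : Set Ω := {ω | y ω = -1} with hA2def
    have hA1m : MeasurableSet A1 := hym (measurableSet_singleton 1)
    have hA2m : MeasurableSet A2 := hym (measurableSet_singleton (-1))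
    have hcompl : A1ᶜ = A2 := by
      ext ω; rcases hyval ω with h | h <;> simp [hA1def, hA2def, h] <;> norm_num
    have hμA1 : μ A1 = 1/2 := hyunif
    have hμA2 : μ A2 = 1/2 := by
      rw [← hcompl, prob_compl_eq_one_sub hA1m, hμA1, ENNReal.sub_half ENNReal.one_ne_top]
    haveI hP1 : IsProbabilityMeasure (μ[|A1]) :=
      cond_isProbabilityMeasure (by rw [hμA1]; norm_num)
    haveI hP2 : IsProbabilityMeasure (μ[|A2]) :=
      cond_isProbabilityMeasure (by rw [hμA2]; norm_num)
    obtain ⟨hm1, hsq1, hint1, hintsq1⟩ := aux_cond_moments (μ[|A1]) b n nb p σ2 k 1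
      hp hσ hk (Or.inl rfl) hbm hnm hnbm (hb 1 (Or.inl rfl)) (hn 1 (Or.inl rfl))
      (hnb 1 (Or.inl rfl)) (hindep 1 (Or.inl rfl))
    obtain ⟨hm2, hsq2, hint2, hintsq2⟩ := aux_cond_moments (μ[|A2]) b n nb p σ2 k (-1)
      hp hσ hk (Or.inr rfl) hbm hnm hnbm (hb (-1) (Or.inr rfl)) (hn (-1) (Or.inr rfl))
      (hnb (-1) (Or.inr rfl)) (hindep (-1) (Or.inr rfl))
    -- membership a.e. in conditional measures
    have hmem1 : ∀ᵐ ω ∂(μ[|A1]), ω ∈ A1 := by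
      have h := ae_restrict_mem hA1m (μ := μ)
      exact Measure.ae_smul_measure h _
    have hmem2 : ∀ᵐ ω ∂(μ[|A2]), ω ∈ A2 := by
      have h := ae_restrict_mem hA2m (μ := μ)
      exact Measure.ae_smul_measure h _
    -- key total expectation helper
    have key : ∀ g : Ω → ℝ, Integrable g (μ[|A1]) → Integrable g (μ[|A2]) →
        ∫ ω, g ω ∂μ = (1/2) * (∫ ω, g ω ∂(μ[|A1])) + (1/2) * (∫ ω, g ω ∂(μ[|A2])) := by
      intro g hg1 hg2
      obtain ⟨hio1, he1⟩ := aux_cond_int μ hA1m hμA1 g hg1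
      obtain ⟨hio2, he2⟩ := aux_cond_int μ hA2m hμA2 g hg2
      have hgint : Integrable g μ := by
        have := hio1.union hio2
        rwa [← hcompl, Set.union_compl_self, integrableOn_univ] at this
      rw [← integral_add_compl hA1m hgint, he1, hcompl, he2]
    -- E[xy]
    have hxy1 : (fun ω => x ω * y ω) =ᵐ[μ[|A1]]
        (fun ω => b ω * n ω + (1 - b ω) * nb ω) := by
      filter_upwards [hmem1] with ω hω
      have : y ω = 1 := hω
      rw [hx, this, mul_one]
    have hxy2 : (fun ω => x ω * y ω) =ᵐ[μ[|A2]]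
        (fun ω => -(b ω * n ω + (1 - b ω) * nb ω)) := by
      filter_upwards [hmem2] with ω hω
      have : y ω = -1 := hω
      rw [hx, this]; ring
    have hExy : ∫ ω, x ω * y ω ∂μ = 1 := by
      rw [key _ (hint1.congr hxy1.symm) ((hint2.neg).congr hxy2.symm)]
      rw [integral_congr_ae hxy1, integral_congr_ae hxy2, hm1, integral_neg, hm2]
      norm_num
    -- E[x²]
    have hx2eq : (fun ω => (x ω)^2) = fun ω => (b ω * n ω + (1 - b ω) * nb ω)^2 := by
      ext ω; rw [hx]
    have hEx2 : ∫ ω, (x ω)^2 ∂μ = 1 + (σ2:ℝ) * (p + (k:ℝ) * (1 - p)) := by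
      rw [hx2eq, key _ hintsq1 hintsq2, hsq1, hsq2]; ring
    -- E[y²]
    have hEy2 : ∫ ω, (y ω)^2 ∂μ = 1 := by
      have : (fun ω => (y ω)^2) = fun _ => (1:ℝ) := by
        ext ω; rcases hyval ω with h | h <;> rw [h] <;> norm_num
      rw [this, integral_const]; simp
    rw [hExy, hEx2, hEy2, mul_one]
  · -- monotonicity
    intro hk1 p1 p2 h0 h12 h2
    have hσR : (0:ℝ) < σ2 := hσ
    have hkR : (1:ℝ) < k := hk1
    have hp2 : (0:ℝ) ≤ p2 := h0.trans h12.le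
    have hk0 : (0:ℝ) ≤ k := by linarith
    have hinner : (0:ℝ) ≤ p2 + (k:ℝ)*(1-p2) := by nlinarith
    have h2pos : 0 < 1 + (σ2:ℝ) * (p2 + (k:ℝ) * (1 - p2)) := by
      nlinarith [mul_nonneg hσR.le hinner]
    have hlt : 1 + (σ2:ℝ) * (p2 + (k:ℝ) * (1 - p2))
        < 1 + (σ2:ℝ) * (p1 + (k:ℝ) * (1 - p1)) := by
      nlinarith [mul_pos hσR (mul_pos (sub_pos.mpr hkR) (sub_pos.mpr h12))]
    exact one_div_lt_one_div_of_lt (Real.sqrt_pos.mpr h2pos)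
      (Real.sqrt_lt_sqrt h2pos.le hlt)
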